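/- Let k be a field of characteristic 2, G = C2 × C2 = ⟨g⟩ × ⟨h⟩, and let w be the 2-dimensional kG-module on which g acts trivially and h acts by the regular representation of C2. Let Ω(k) denote the augmentation ideal of kG. Then Hom_w(k, Ω(k)) = 0; that is, every kG-homomorphism from the trivial module k into Ω(k) factors through a w-projective module. (Hence the simple module k does not detect Ω(k) in the relatively stable category, so the simple modules do not generate StMod_w(kG).) -/

import Mathlib

open CategoryTheory MonoidalCategory Limits

/-- `X` is `w`-projective: `X` is a direct summand of `w ⊗ Y` (diagonal `G`-action)
for some `kG`-module `Y`. -/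
def IsRelProjective {k G : Type} [Field k] [Group G] (w X : Rep k G) : Prop :=
  ∃ (Y : Rep k G) (i : X ⟶ w ⊗ Y) (r : w ⊗ Y ⟶ X), i ≫ r = 𝟙 X

/-- `f` factors through some `w`-projective module. -/
def FactorsThroughRelProj {k G : Type} [Field k] [Group G] (w : Rep k G)
    {X Y : Rep k G} (f : X ⟶ Y) : Prop :=
  ∃ (Z : Rep k G) (g : X ⟶ Z) (h : Z ⟶ Y), IsRelProjective w Z ∧ g ≫ h = f

/-- The cyclic group of order 2. -/
abbrev CycTwo : Type := Multiplicative (ZMod 2)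

/-- The Klein four group `G = C2 × C2 = ⟨g⟩ × ⟨h⟩`. -/
abbrev KleinFour : Type := CycTwo × CycTwo

/-- The 2-dimensional `kG`-module `k[C2]` on which the first factor `⟨g⟩` of the Klein
four group acts trivially and the second factor `⟨h⟩` acts by the regular
representation of `C2`; i.e. `w ≅ Ind_{⟨g⟩×1}^G (k)`. -/
noncomputable def wKlein (k : Type) [Field k] : Rep k KleinFour :=
  Rep.of ((Representation.ofMulAction k CycTwo CycTwo).comp (MonoidHom.snd CycTwo CycTwo))

/-- The regular module `kG` (the group algebra with the left regular action). -/
noncomputable def regRep (k G : Type) [Field k] [Group G] : Rep k G :=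
  Rep.of (Representation.ofMulAction k G G)

/-- The augmentation map `kG → k`, sending each group element to `1`, as a morphism
of representations. -/
noncomputable def augmentation (k G : Type) [Field k] [Group G] :
    regRep k G ⟶ Rep.trivial k G k :=
  Rep.ofHom
  { toLinearMap := Finsupp.linearCombination k (fun _ => (1 : k)) ∘ₗ
      (MonoidAlgebra.coeffLinearEquiv k).toLinearMap
    isIntertwining' := fun g => by
      refine MonoidAlgebra.lhom_ext' fun a => ?_
      ext
      simp [Representation.ofMulAction_single, MonoidAlgebra.coeffLinearEquiv] }

/-- `Ω(k)`: the augmentation ideal of `kG`, the kernel of the augmentation `kG → k`. -/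
noncomputable def augIdeal (k G : Type) [Field k] [Group G] : Rep k G :=
  kernel (augmentation k G)

section Aux
def sig : CycTwo := Multiplicative.ofAdd 1

lemma cyc_cases : ∀ a : CycTwo, a = 1 ∨ a = sig := by decide

lemma sig_mul_sig : sig * sig = 1 := by decide
lemma sig_ne_one : sig ≠ 1 := by decide
lemma one_ne_sig : (1 : CycTwo) ≠ sig := by decide

variable (k : Type) [Field k] [CharP k 2]

noncomputable def phiHom : MonoidAlgebra k CycTwo →ₗ[k] MonoidAlgebra k KleinFour :=
  MonoidAlgebra.mapDomainLinearMap k k (fun a => ((1 : CycTwo), a)) +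
  MonoidAlgebra.mapDomainLinearMap k k (fun a => (sig, a))

omit [CharP k 2] in
lemma phiHom_single (a : CycTwo) (b : k) :
    phiHom k (MonoidAlgebra.single a b) =
      MonoidAlgebra.single ((1 : CycTwo), a) b + MonoidAlgebra.single (sig, a) b := by
  simp [phiHom]

omit [CharP k 2] in
lemma phi_comm (g : KleinFour) :
    (phiHom k) ∘ₗ ((wKlein k).ρ g) = ((regRep k KleinFour).ρ g) ∘ₗ (phiHom k) := by
  refine MonoidAlgebra.lhom_ext' fun a => LinearMap.ext fun b => ?_
  show phiHom k ((wKlein k).ρ g (MonoidAlgebra.single a b)) =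
    (Representation.ofMulAction k KleinFour KleinFour) g (phiHom k (MonoidAlgebra.single a b))
  have h1 : (wKlein k).ρ g (MonoidAlgebra.single a b) = MonoidAlgebra.single (g.2 * a) b :=
    Representation.ofMulAction_single g.2 a b
  have h2 : ∀ x : KleinFour, (Representation.ofMulAction k KleinFour KleinFour) g (MonoidAlgebra.single x b) =
      MonoidAlgebra.single (g * x) b := fun x => Representation.ofMulAction_single g x b
  rw [h1, phiHom_single, phiHom_single, map_add, h2, h2]
  obtain ⟨g1, g2⟩ := g
  rcases cyc_cases g1 with hg | hg <;>
    simp only [hg, Prod.mk_mul_mk, one_mul, mul_one, sig_mul_sig]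
  exact add_comm _ _

noncomputable def phi : wKlein k ⟶ regRep k KleinFour :=
  Rep.ofHom { toLinearMap := phiHom k, isIntertwining' := phi_comm k }

lemma phi_aug : phi k ≫ augmentation k KleinFour = 0 := by
  refine Rep.hom_ext (Representation.IntertwiningMap.ext
    (MonoidAlgebra.lhom_ext' fun a => LinearMap.ext fun b => ?_))
  show (Finsupp.linearCombination k fun _ => (1 : k))
    ((MonoidAlgebra.coeffLinearEquiv k) (phiHom k (MonoidAlgebra.single a b))) = 0
  rw [phiHom_single]
  simp [CharTwo.add_self_eq_zero]
end Aux

/-- Over the Klein four group in characteristic 2, with `w = Ind_{⟨g⟩×1}^G(k)`,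
`Hom_w(k, Ω(k)) = 0`: every `kG`-homomorphism from the trivial module `k` into
`Ω(k)` factors through a `w`-projective module. -/
theorem homW_trivial_omega_eq_zero (k : Type) [Field k] [CharP k 2] :
    ∀ f : Rep.trivial k KleinFour k ⟶ augIdeal k KleinFour,
      FactorsThroughRelProj (wKlein k) f := by
  intro f
  set F := f ≫ kernel.ι (augmentation k KleinFour) with hF
  set v : MonoidAlgebra k KleinFour := F.hom (1 : k) with hv
  have hfix : ∀ g : KleinFour, Representation.ofMulAction k KleinFour KleinFour g v = v := by
    intro g
    have h := Rep.hom_comm_apply F g (1 : k)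
    rw [Rep.trivial_ρ_apply] at h
    exact h.symm
  have hconst : ∀ x : KleinFour, v.coeff x = v.coeff 1 := by
    intro x
    have h : (Representation.ofMulAction k KleinFour KleinFour x v).coeff x = v.coeff x :=
      congrArg (fun p => MonoidAlgebra.coeff p x) (hfix x)
    rw [Representation.coeff_ofMulAction] at h
    simpa using h.symm
  set c : k := v.coeff 1 with hc
  set u : MonoidAlgebra k CycTwo := c • (MonoidAlgebra.single (1 : CycTwo) (1:k) + MonoidAlgebra.single sig 1) with hu
  have hufix : ∀ g : KleinFour, (Representation.ofMulAction k CycTwo CycTwo) g.2 u = u := by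
    intro g
    have step : (Representation.ofMulAction k CycTwo CycTwo) g.2 u =
        c • (MonoidAlgebra.single (g.2 * 1) (1:k) + MonoidAlgebra.single (g.2 * sig) 1) := by
      rw [hu, map_smul, map_add,
        show ((Representation.ofMulAction k CycTwo CycTwo) g.2) (MonoidAlgebra.single (1:CycTwo) (1:k))
          = MonoidAlgebra.single (g.2 * 1) (1:k) from Representation.ofMulAction_single g.2 1 1,
        show ((Representation.ofMulAction k CycTwo CycTwo) g.2) (MonoidAlgebra.single sig (1:k))
          = MonoidAlgebra.single (g.2 * sig) (1:k) from Representation.ofMulAction_single g.2 sig 1]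
    rw [step, hu]
    rcases cyc_cases g.2 with hg | hg <;>
      simp only [hg, one_mul, mul_one, sig_mul_sig]
    rw [add_comm]
  refine ⟨wKlein k, Rep.ofHom ⟨LinearMap.toSpanSingleton k _ u, ?_⟩, kernel.lift _ (phi k) (phi_aug k),
    ⟨𝟙_ (Rep k KleinFour), (ρ_ (wKlein k)).inv, (ρ_ (wKlein k)).hom, (ρ_ (wKlein k)).inv_hom_id⟩,
    ?_⟩
  · intro g
    refine LinearMap.ext_ring ?_
    show LinearMap.toSpanSingleton k _ u ((Rep.trivial k KleinFour k).ρ g (show k from 1)) =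
      (wKlein k).ρ g (LinearMap.toSpanSingleton k _ u 1)
    rw [Rep.trivial_ρ_apply]
    simp only [LinearMap.toSpanSingleton_apply, one_smul]
    exact (hufix g).symm
  · apply (cancel_mono (kernel.ι (augmentation k KleinFour))).1
    refine (Category.assoc _ _ _).trans ?_
    refine (congrArg (fun t => _ ≫ t) (kernel.lift_ι _ _ _)).trans ?_
    show _ = F
    refine Rep.hom_ext (Representation.IntertwiningMap.ext ?_)
    refine LinearMap.ext_ring ?_
    show phiHom k (LinearMap.toSpanSingleton k _ u 1) = v
    rw [LinearMap.toSpanSingleton_apply, one_smul, hu, map_smul, map_add,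
      phiHom_single, phiHom_single]
    ext x
    obtain ⟨x1, x2⟩ := x
    rw [hconst (x1, x2)]
    rcases cyc_cases x1 with h1 | h1 <;> rcases cyc_cases x2 with h2 | h2 <;>
      subst h1 <;> subst h2 <;>
      simp [MonoidAlgebra.coeff_single_apply, Finsupp.single_apply, Prod.ext_iff, sig_ne_one, one_ne_sig, hc]
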